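/- For each odd prime p, T(p) = 1 - 2p. -/

import Mathlib

/-- `T(h,k) := ∑_{j=1}^{2k-1} (-1)^{j+1+⌊hj/k⌋}`. -/
def Tpair (h k : ℕ) : ℤ := ∑ j ∈ Finset.Icc 1 (2 * k - 1), (-1 : ℤ) ^ (j + 1 + h * j / k)

/-- `T(k) := ∑_{h=1}^{2k-1} T(h,k)`. -/
def Tsum (k : ℕ) : ℤ := ∑ h ∈ Finset.Icc 1 (2 * k - 1), Tpair h k

lemma negpow_congr {a b : ℕ} (h : a % 2 = b % 2) : (-1 : ℤ) ^ a = (-1 : ℤ) ^ b := by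
  rcases Nat.even_or_odd a with ha | ha
  · rw [ha.neg_one_pow, (Nat.even_iff.mpr (h ▸ Nat.even_iff.mp ha)).neg_one_pow]
  · rw [ha.neg_one_pow, (Nat.odd_iff.mpr (h ▸ Nat.odd_iff.mp ha)).neg_one_pow]

/-- Splitting the sum over `[1, 2p-1]` at `p`. -/
lemma sum_split (p : ℕ) (hp : 1 ≤ p) (f : ℕ → ℤ) :
    ∑ h ∈ Finset.Icc 1 (2 * p - 1), f h =
      (∑ i ∈ Finset.range (p - 1), f (1 + i)) + f p
        + ∑ i ∈ Finset.range (p - 1), f (p + (1 + i)) := by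
  have h1 : Finset.Icc 1 (2 * p - 1) = Finset.Ico 1 (2 * p) := by
    ext x; simp only [Finset.mem_Icc, Finset.mem_Ico]; omega
  rw [h1, ← Finset.sum_Ico_consecutive f (show 1 ≤ p + 1 by omega) (show p + 1 ≤ 2 * p by omega)]
  rw [Finset.sum_Ico_eq_sum_range, Finset.sum_Ico_eq_sum_range]
  have h2 : p + 1 - 1 = (p - 1) + 1 := by omega
  have h3 : 2 * p - (p + 1) = p - 1 := by omega
  rw [h2, h3, Finset.sum_range_succ]
  have h4 : 1 + (p - 1) = p := by omega
  rw [h4]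
  congr 1
  apply Finset.sum_congr rfl
  intro i _
  congr 1
  omega

/-- For odd `j`, `∑_{h=1}^{2p-1} (-1)^{⌊hj/p⌋} = -1`. -/
lemma A_odd {p j : ℕ} (hp : 1 ≤ p) (hj : Odd j) :
    ∑ h ∈ Finset.Icc 1 (2 * p - 1), (-1 : ℤ) ^ (h * j / p) = -1 := by
  rw [sum_split p hp]
  have key : ∀ h : ℕ, (-1 : ℤ) ^ ((p + h) * j / p) = -(-1 : ℤ) ^ (h * j / p) := by
    intro h
    have h1 : (p + h) * j = h * j + p * j := by ring
    rw [h1, Nat.add_mul_div_left _ _ (by omega : 0 < p), pow_add, hj.neg_one_pow, mul_neg_one]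
  have hpj : p * j / p = j := Nat.mul_div_cancel_left j (by omega)
  simp only [key, hpj, hj.neg_one_pow, Finset.sum_neg_distrib]
  ring

/-- For even `j` not divisible by odd prime `p`, `∑_{h=1}^{2p-1} (-1)^{⌊hj/p⌋} = 1`. -/
lemma A_even {p j : ℕ} (hp : p.Prime) (hodd : Odd p) (hj : Even j) (hjp : ¬ p ∣ j) :
    ∑ h ∈ Finset.Icc 1 (2 * p - 1), (-1 : ℤ) ^ (h * j / p) = 1 := by
  have hp1 : 1 ≤ p := hp.one_lt.le.trans' (by omega)
  -- first: (-1)^(h*j/p) = (-1)^(h*j % p) since h*j is even and p is odd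
  have parity : ∀ h : ℕ, (-1 : ℤ) ^ (h * j / p) = (-1 : ℤ) ^ (h * j % p) := by
    intro h
    obtain ⟨c, hc⟩ := hodd
    obtain ⟨e, he⟩ := hj.mul_left h
    have hdm := Nat.div_add_mod (h * j) p
    have hpq : p * (h * j / p) = 2 * (c * (h * j / p)) + h * j / p := by rw [hc]; ring
    exact negpow_congr (by omega)
  simp only [parity]
  rw [sum_split p hp1]
  have key : ∀ h : ℕ, ((p + h) * j) % p = (h * j) % p := by
    intro h
    have h1 : (p + h) * j = h * j + p * j := by ring
    rw [h1, Nat.add_mul_mod_self_left]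
  have hpj : p * j % p = 0 := Nat.mul_mod_right p j
  simp only [key, hpj, pow_zero]
  have hzero : ∑ i ∈ Finset.range (p - 1), (-1 : ℤ) ^ ((1 + i) * j % p) = 0 := by
    have hIcc : ∑ i ∈ Finset.range (p - 1), (-1 : ℤ) ^ ((1 + i) * j % p)
        = ∑ h ∈ Finset.Icc 1 (p - 1), (-1 : ℤ) ^ (h * j % p) := by
      rw [show Finset.Icc 1 (p - 1) = Finset.Ico 1 p by
          ext x; simp only [Finset.mem_Icc, Finset.mem_Ico]; omega,
        Finset.sum_Ico_eq_sum_range]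
    rw [hIcc]
    apply Finset.sum_involution (fun h _ => p - h)
    · intro h hh
      simp only [Finset.mem_Icc] at hh
      have hpdvd : ¬ p ∣ h * j := by
        intro hd
        rcases (Nat.Prime.dvd_mul hp).mp hd with h1 | h1
        · have := Nat.le_of_dvd (by omega) h1; omega
        · exact hjp h1
      have hr0 : h * j % p ≠ 0 := fun h0 => hpdvd (Nat.dvd_of_mod_eq_zero h0)
      have hrlt : h * j % p < p := Nat.mod_lt _ (by omega)
      have hpdvd' : ¬ p ∣ (p - h) * j := by
        intro hd
        rcases (Nat.Prime.dvd_mul hp).mp hd with h1 | h1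
        · have := Nat.le_of_dvd (by omega) h1; omega
        · exact hjp h1
      have hs0 : (p - h) * j % p ≠ 0 := fun h0 => hpdvd' (Nat.dvd_of_mod_eq_zero h0)
      have hslt : (p - h) * j % p < p := Nat.mod_lt _ (by omega)
      have hsum : ((p - h) * j % p + h * j % p) % p = 0 := by
        rw [← Nat.add_mod]
        have h1 : (p - h) * j + h * j = p * j := by
          have h2 : (p - h) + h = p := by omega
          calc (p - h) * j + h * j = ((p - h) + h) * j := by ring
            _ = p * j := by rw [h2]
        rw [h1, Nat.mul_mod_right]
      have hsval : (p - h) * j % p = p - h * j % p := by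
        obtain ⟨c, hc⟩ := Nat.dvd_of_mod_eq_zero hsum
        rcases c with _ | _ | c
        · omega
        · omega
        · have : p * 2 ≤ p * (c + 1 + 1) := Nat.mul_le_mul_left p (by omega)
          omega
      rw [hsval]
      obtain ⟨m, hm⟩ := hodd
      rcases Nat.even_or_odd (h * j % p) with hr | hr
      · have hodd' : Odd (p - h * j % p) := by
          obtain ⟨e, he⟩ := hr
          exact Nat.odd_iff.mpr (by omega)
        rw [hr.neg_one_pow, hodd'.neg_one_pow]; ring
      · have heven' : Even (p - h * j % p) := by
          obtain ⟨e, he⟩ := hr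
          exact Nat.even_iff.mpr (by omega)
        rw [hr.neg_one_pow, heven'.neg_one_pow]; ring
    · intro h hh _
      simp only [Finset.mem_Icc] at hh
      obtain ⟨c, hc⟩ := hodd
      omega
    · intro h hh
      simp only [Finset.mem_Icc] at hh ⊢
      omega
    · intro h hh
      simp only [Finset.mem_Icc] at hh
      omega
  rw [hzero]
  ring

theorem stmt_15 (p : ℕ) (hp : p.Prime) (hodd : Odd p) : Tsum p = 1 - 2 * (p : ℤ) := by
  have hp1 : 1 ≤ p := hp.one_lt.le.trans' (by omega)
  unfold Tsum Tpair
  rw [Finset.sum_comm]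
  have hterm : ∀ j ∈ Finset.Icc 1 (2 * p - 1),
      (∑ h ∈ Finset.Icc 1 (2 * p - 1), (-1 : ℤ) ^ (j + 1 + h * j / p)) = -1 := by
    intro j hj
    simp only [Finset.mem_Icc] at hj
    have hsplit : ∀ h : ℕ,
        (-1 : ℤ) ^ (j + 1 + h * j / p) = (-1 : ℤ) ^ (j + 1) * (-1 : ℤ) ^ (h * j / p) := by
      intro h; rw [pow_add]
    simp only [hsplit, ← Finset.mul_sum]
    rcases Nat.even_or_odd j with hje | hjo
    · have hjp : ¬ p ∣ j := by
        intro hd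
        obtain ⟨c, hc⟩ := hd
        obtain ⟨m, hm⟩ := hodd
        obtain ⟨e, he⟩ := hje
        have hc2 : c < 2 := by
          apply Nat.lt_of_mul_lt_mul_left (a := p)
          omega
        interval_cases c <;> omega
      rw [A_even hp hodd hje hjp]
      have hodd1 : Odd (j + 1) := by
        obtain ⟨e, he⟩ := hje; exact ⟨e, by omega⟩
      rw [hodd1.neg_one_pow]; ring
    · rw [A_odd hp1 hjo]
      have heven1 : Even (j + 1) := by
        obtain ⟨e, he⟩ := hjo; exact ⟨e + 1, by omega⟩
      rw [heven1.neg_one_pow]; ring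
  rw [Finset.sum_congr rfl hterm, Finset.sum_const, Nat.card_Icc]
  have hc : 2 * p - 1 + 1 - 1 = 2 * p - 1 := by omega
  rw [hc]
  have h2 : ((2 * p - 1 : ℕ) : ℤ) = 2 * p - 1 := by omega
  simp only [nsmul_eq_mul, h2]
  ring
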